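/- arXiv:1901.02178 — 2 statements merged into one kernel-verified Lean document; each statement's English description precedes it below -/
import Mathlib

section
/- A cyclic trajectory that visits each of n terminals exactly once every n time-slots achieves average age exactly (n+1)/2 at every terminal, hence network average age n(n+1)/2 with unit weights; thus if the mobility graph is Hamiltonian, the average-age lower bound n(n+1)/2 is attained. -/
open Finset Filter

theorem stmt7 {V : Type*} [Fintype V] [DecidableEq V] (n : ℕ) (hn : n = Fintype.card V)
    (hn1 : 0 < n)
    (m : ℕ → V) (hper : ∀ t, m (t + n) = m t)
    (hvisit : ∀ i : V, ∃! t : Fin n, m t = i)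
    (A : V → ℕ → ℕ)
    (hA : ∀ i t, A i (t + 1) = if m (t + 1) = i then 1 else A i t + 1) :
    (∀ i, Tendsto (fun T : ℕ => (∑ t ∈ Finset.range T, (A i t : ℝ)) / T) atTop
      (nhds (((n : ℝ) + 1) / 2))) ∧
    Tendsto (fun T : ℕ => ∑ i : V, (∑ t ∈ Finset.range T, (A i t : ℝ)) / T) atTop
      (nhds ((n : ℝ) * (n + 1) / 2)) := by
  set c : ℝ := ((n : ℝ) + 1) / 2 with hc
  have hc0 : 0 ≤ c := by positivity
  -- m is determined by t % n
  have hmod : ∀ t : ℕ, m t = m (t % n) := by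
    intro t
    conv_lhs => rw [← Nat.mod_add_div t n]
    generalize t / n = k
    induction k with
    | zero => simp
    | succ k ih =>
        rw [Nat.mul_succ, ← add_assoc, hper, ih]
  -- Gauss sum
  have hgauss : ∀ r : ℕ, (∑ s ∈ Finset.range r, ((s : ℝ) + 1)) = r * (r + 1) / 2 := by
    intro r
    induction r with
    | zero => simp
    | succ k ih => rw [Finset.sum_range_succ, ih]; push_cast; ring
  -- the mod-sum G
  set G : ℕ → ℝ := fun K => ∑ s ∈ Finset.range K, (((s % n : ℕ) : ℝ) + 1) with hG'
  have hGdef : ∀ K, G K = ∑ s ∈ Finset.range K, (((s % n : ℕ) : ℝ) + 1) := fun K => rfl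
  have hGsmall : ∀ r : ℕ, r ≤ n → G r = r * (r + 1) / 2 := by
    intro r hr
    rw [hGdef, ← hgauss r]
    apply Finset.sum_congr rfl
    intro s hs
    rw [Finset.mem_range] at hs
    rw [Nat.mod_eq_of_lt (lt_of_lt_of_le hs hr)]
  have hGn : G n = n * c := by
    rw [hGsmall n le_rfl, hc]; ring
  have hGadd : ∀ K, G (n + K) = n * c + G K := by
    intro K
    rw [hGdef, Finset.sum_range_add, ← hGdef, hGn]
    congr 1
    rw [hGdef]
    apply Finset.sum_congr rfl
    intro s _
    rw [Nat.add_mod_left]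
  have hGq : ∀ q r : ℕ, G (q * n + r) = q * (n * c) + G r := by
    intro q r
    induction q with
    | zero => simp
    | succ k ih =>
        have : (k + 1) * n + r = n + (k * n + r) := by ring
        rw [this, hGadd, ih]
        push_cast
        ring
  have hGdev : ∀ K : ℕ, |G K - K * c| ≤ (n : ℝ) * n := by
    intro K
    have hK : K = K / n * n + K % n := (Nat.div_add_mod' K n).symm
    have hr : K % n < n := Nat.mod_lt K hn1
    rw [hK, hGq, hGsmall _ (le_of_lt hr)]
    set r : ℕ := K % n
    have hcast : (((K / n) * n + r : ℕ) : ℝ) = (K / n : ℕ) * n + r := by push_cast; ring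
    rw [hcast]
    have hrw : (K / n : ℕ) * ((n : ℝ) * c) + (r : ℝ) * (r + 1) / 2 - ((K / n : ℕ) * n + r) * c
        = (r : ℝ) * ((r : ℝ) - n) / 2 := by rw [hc]; ring
    rw [hrw, abs_div, abs_of_nonneg (by norm_num : (0:ℝ) ≤ 2), abs_mul,
      abs_of_nonneg (by positivity : (0:ℝ) ≤ (r:ℝ))]
    have h2 : (r : ℝ) ≤ n := by exact_mod_cast le_of_lt hr
    have h1 : |(r : ℝ) - n| ≤ n := by
      rw [abs_le]
      constructor
      · have : (0:ℝ) ≤ (r:ℝ) := by positivity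
        linarith
      · linarith
    have hn0 : (0:ℝ) ≤ n := by positivity
    calc (r : ℝ) * |(r : ℝ) - n| / 2 ≤ (n : ℝ) * n / 2 := by
          gcongr
      _ ≤ (n : ℝ) * n := by nlinarith
  -- first conjunct
  have key : ∀ i, Tendsto (fun T : ℕ => (∑ t ∈ Finset.range T, (A i t : ℝ)) / T) atTop
      (nhds c) := by
    intro i
    obtain ⟨ti, hti, huniq⟩ := hvisit i
    have hvis : ∀ t : ℕ, m t = i ↔ t % n = (ti : ℕ) := by
      intro t
      rw [hmod t]
      constructor
      · intro h
        have := huniq ⟨t % n, Nat.mod_lt t hn1⟩ h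
        exact congrArg Fin.val this
      · intro h
        rw [h]
        exact hti
    set N : ℕ := (ti : ℕ) + n with hN
    -- value of A after the first visit
    have hAval : ∀ s : ℕ, A i (N + s) = s % n + 1 := by
      intro s
      induction s with
      | zero =>
          have h1 := hA i ((ti : ℕ) + n - 1)
          have he : (ti : ℕ) + n - 1 + 1 = (ti : ℕ) + n := by omega
          rw [he] at h1
          have hm : m ((ti : ℕ) + n) = i := by
            rw [hvis, Nat.add_mod_right, Nat.mod_eq_of_lt ti.isLt]
          simp [hN, hm, h1]
      | succ s ih =>
          have h1 := hA i (N + s)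
          rw [show N + s + 1 = N + (s + 1) from rfl] at h1
          have hsucc : (s + 1) % n = (s % n + 1) % n := by
            conv_lhs => rw [← Nat.mod_add_div s n,
              show s % n + n * (s / n) + 1 = s % n + 1 + n * (s / n) by ring]
            rw [Nat.add_mul_mod_self_left]
          by_cases hd : (s + 1) % n = 0
          · have hm : m (N + (s + 1)) = i := by
              rw [hvis, hN]
              have hq : ((ti : ℕ) + n + (s + 1)) % n = ((ti : ℕ) + (s + 1)) % n := by
                rw [show (ti : ℕ) + n + (s + 1) = (ti : ℕ) + (s + 1) + n by ring,
                  Nat.add_mod_right]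
              rw [hq, Nat.add_mod, hd, Nat.add_zero, Nat.mod_mod_of_dvd,
                Nat.mod_eq_of_lt ti.isLt]
              exact dvd_refl n
            rw [h1, if_pos hm, hd]
          · have hm : ¬ (m (N + (s + 1)) = i) := by
              rw [hvis]
              intro hcon
              have hmm : ((ti : ℕ) + (s + 1)) % n = ((ti : ℕ) + 0) % n := by
                simp only [Nat.add_zero]
                rw [Nat.mod_eq_of_lt ti.isLt,
                  ← Nat.add_mod_right ((ti : ℕ) + (s + 1)) n,
                  show (ti : ℕ) + (s + 1) + n = N + (s + 1) by rw [hN]; ring]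
                exact hcon
              have h2 : (s + 1) ≡ 0 [MOD n] := Nat.ModEq.add_left_cancel' (ti : ℕ) hmm
              exact hd (by simpa [Nat.ModEq] using h2)
            rw [h1, if_neg hm, ih]
            have hlt : s % n < n := Nat.mod_lt s hn1
            have hne : s % n + 1 ≠ n := by
              intro hcon
              apply hd
              rw [hsucc, hcon, Nat.mod_self]
            have hlt2 : s % n + 1 < n := lt_of_le_of_ne (Nat.succ_le_of_lt hlt) hne
            rw [hsucc, Nat.mod_eq_of_lt hlt2]
    set SN : ℝ := ∑ t ∈ Finset.range N, (A i t : ℝ) with hSN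
    have hSN0 : 0 ≤ SN := Finset.sum_nonneg (fun t _ => by positivity)
    set C : ℝ := SN + N * c + n * n with hC
    have hbound : ∀ T : ℕ, |(∑ t ∈ Finset.range T, (A i t : ℝ)) - T * c| ≤ C := by
      intro T
      by_cases hT : T ≤ N
      · have h1 : (∑ t ∈ Finset.range T, (A i t : ℝ)) ≤ SN := by
          rw [hSN]
          apply Finset.sum_le_sum_of_subset_of_nonneg
          · exact Finset.range_subset_range.2 hT
          · intro t _ _; positivity
        have h2 : (0:ℝ) ≤ ∑ t ∈ Finset.range T, (A i t : ℝ) :=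
          Finset.sum_nonneg (fun t _ => by positivity)
        have h3 : (T : ℝ) * c ≤ N * c := by
          apply mul_le_mul_of_nonneg_right _ hc0
          exact_mod_cast hT
        have h4 : (0:ℝ) ≤ (T : ℝ) * c := by positivity
        have h5 : (0:ℝ) ≤ (n : ℝ) * n := by positivity
        rw [abs_le, hC]
        constructor <;> linarith
      · push_neg at hT
        obtain ⟨K, rfl⟩ : ∃ K, T = N + K := ⟨T - N, by omega⟩
        have hsplit : (∑ t ∈ Finset.range (N + K), (A i t : ℝ)) = SN + G K := by
          rw [Finset.sum_range_add, ← hSN, hGdef]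
          congr 1
          apply Finset.sum_congr rfl
          intro s _
          rw [hAval s]
          push_cast
          ring
        rw [hsplit]
        have he : (SN + G K) - (N + K : ℕ) * c = (SN - N * c) + (G K - K * c) := by
          push_cast; ring
        rw [he]
        calc |(SN - N * c) + (G K - K * c)| ≤ |SN - N * c| + |G K - K * c| := abs_add_le _ _
          _ ≤ (SN + N * c) + n * n := by
              gcongr
              · rw [abs_le]
                have : (0:ℝ) ≤ (N:ℝ) * c := by positivity
                constructor <;> linarith
              · exact hGdev K
          _ = C := by rw [hC]
    -- conclude tendsto
    have h0 : Tendsto (fun T : ℕ => (∑ t ∈ Finset.range T, (A i t : ℝ)) / T - c) atTop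
        (nhds 0) := by
      apply squeeze_zero_norm' (a := fun T : ℕ => C / T)
      · filter_upwards [eventually_ge_atTop 1] with T hT
        have hT0 : (0:ℝ) < T := by exact_mod_cast hT
        rw [Real.norm_eq_abs]
        have heq : (∑ t ∈ Finset.range T, (A i t : ℝ)) / T - c
            = ((∑ t ∈ Finset.range T, (A i t : ℝ)) - T * c) / T := by
          field_simp
        rw [heq, abs_div, abs_of_pos hT0]
        gcongr
        exact hbound T
      · exact tendsto_const_div_atTop_nhds_zero_nat C
    have := h0.add (tendsto_const_nhds (x := c) (f := atTop))
    simpa using this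
  refine ⟨key, ?_⟩
  have h2 := tendsto_finset_sum Finset.univ (fun i _ => key i)
  have hsum : ∑ _i : V, c = (n : ℝ) * (n + 1) / 2 := by
    rw [Finset.sum_const, Finset.card_univ, ← hn, nsmul_eq_mul, hc]
    ring
  rw [hsum] at h2
  exact h2
end

section
/- If a trajectory visits every one of n vertices at least once in every window of 2n consecutive time-slots, then the average age of every terminal is at most (2n+1)/2, so with unit weights the network average age is at most n(2n+1)/2, hence within a factor (2n+1)/(n+1) ≤ 2 of the optimal n(n+1)/2. -/
open Finset Filter

theorem stmt8 {V : Type*} [Fintype V] [DecidableEq V] (n : ℕ) (hn : n = Fintype.card V)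
    (hn1 : 0 < n)
    (m : ℕ → V)
    (hvisit : ∀ (i : V) (t : ℕ), ∃ s, t ≤ s ∧ s < t + 2 * n ∧ m s = i)
    (A : V → ℕ → ℕ)
    (hA0 : ∀ i, A i 0 = 1)
    (hA : ∀ i t, A i (t + 1) = if m (t + 1) = i then 1 else A i t + 1) :
    (∀ i, limsup (fun T : ℕ => (∑ t ∈ Finset.range T, (A i t : ℝ)) / T) atTop ≤
      (2 * (n : ℝ) + 1) / 2) ∧
    limsup (fun T : ℕ => ∑ i : V, (∑ t ∈ Finset.range T, (A i t : ℝ)) / T) atTop ≤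
      (n : ℝ) * (2 * n + 1) / 2 ∧
    (2 * (n : ℝ) + 1) / ((n : ℝ) + 1) ≤ 2 := by
  have hApos : ∀ i t, 1 ≤ A i t := by
    intro i t
    induction t with
    | zero => simp [hA0]
    | succ t ih => rw [hA]; split <;> omega
  have hAle : ∀ i t, A i t ≤ t + 1 := by
    intro i t
    induction t with
    | zero => simp [hA0]
    | succ t ih => rw [hA]; split <;> omega
  have hAvisit : ∀ i s k, m s = i → A i (s + k) ≤ k + 1 := by
    intro i s k hm
    induction k with
    | zero =>
      cases s with
      | zero => simp [hA0]
      | succ u => rw [hA, if_pos hm]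
    | succ k ih =>
      rw [show s + (k + 1) = (s + k) + 1 by ring, hA]
      split <;> omega
  have hAbound : ∀ i t, A i t ≤ 2 * n := by
    intro i t
    by_cases ht : t + 1 ≤ 2 * n
    · have := hAle i t; omega
    · obtain ⟨s, h1, h2, hm⟩ := hvisit i (t + 1 - 2 * n)
      have hst : s ≤ t := by omega
      have := hAvisit i s (t - s) hm
      rw [Nat.add_sub_cancel' hst] at this
      omega
  -- invariant
  have hinv : ∀ i T, 2 * (∑ t ∈ Finset.range (T + 1), (A i t : ℝ)) +
      (A i T : ℝ) * (2 * n - A i T) ≤ (2 * n + 1) * (T + 1) := by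
    intro i T
    induction T with
    | zero =>
      simp [hA0]
      push_cast
      nlinarith [hn1]
    | succ T ih =>
      rw [Finset.sum_range_succ]
      have hb : (A i T : ℝ) ≤ 2 * n := by exact_mod_cast hAbound i T
      have hp : (1 : ℝ) ≤ A i T := by exact_mod_cast hApos i T
      by_cases hm : m (T + 1) = i
      · rw [hA, if_pos hm]
        push_cast
        nlinarith
      · rw [hA, if_neg hm]
        have hb1 : (A i T : ℝ) + 1 ≤ 2 * n := by
          have := hAbound i (T + 1)
          rw [hA, if_neg hm] at this
          exact_mod_cast this
        push_cast
        nlinarith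
  have hsum : ∀ i T, (∑ t ∈ Finset.range T, (A i t : ℝ)) ≤ (2 * n + 1) / 2 * T := by
    intro i T
    cases T with
    | zero => simp
    | succ T =>
      have := hinv i T
      have hb : (A i T : ℝ) ≤ 2 * n := by exact_mod_cast hAbound i T
      have hp : (1 : ℝ) ≤ A i T := by exact_mod_cast hApos i T
      push_cast
      nlinarith
  have hc : (0 : ℝ) ≤ (2 * n + 1) / 2 := by positivity
  have hf : ∀ i (T : ℕ), (∑ t ∈ Finset.range T, (A i t : ℝ)) / T ≤ (2 * n + 1) / 2 := by
    intro i T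
    cases T with
    | zero => simpa using hc
    | succ T =>
      rw [div_le_iff₀ (by positivity)]
      exact hsum i (T + 1)
  have hfnn : ∀ i (T : ℕ), (0 : ℝ) ≤ (∑ t ∈ Finset.range T, (A i t : ℝ)) / T := by
    intro i T
    apply div_nonneg _ (by positivity)
    exact Finset.sum_nonneg fun t _ => by positivity
  refine ⟨fun i => ?_, ?_, ?_⟩
  · exact limsup_le_of_le (isCoboundedUnder_le_of_le atTop (hfnn i))
      (Eventually.of_forall (hf i))
  · have hcard : (Finset.univ : Finset V).card = n := by simp [hn]
    have hsumf : ∀ T : ℕ, (∑ i : V, (∑ t ∈ Finset.range T, (A i t : ℝ)) / T) ≤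
        (n : ℝ) * (2 * n + 1) / 2 := by
      intro T
      calc (∑ i : V, (∑ t ∈ Finset.range T, (A i t : ℝ)) / T)
          ≤ ∑ _i : V, (2 * (n : ℝ) + 1) / 2 :=
            Finset.sum_le_sum fun i _ => hf i T
        _ = (n : ℝ) * (2 * n + 1) / 2 := by
            rw [Finset.sum_const, hcard]; push_cast; ring
    have hsnn : ∀ T : ℕ, (0 : ℝ) ≤ ∑ i : V, (∑ t ∈ Finset.range T, (A i t : ℝ)) / T :=
      fun T => Finset.sum_nonneg fun i _ => hfnn i T
    exact limsup_le_of_le (isCoboundedUnder_le_of_le atTop hsnn)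
      (Eventually.of_forall hsumf)
  · rw [div_le_iff₀ (by positivity)]
    push_cast
    linarith
end
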